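/- Let n ≥ 2 and let u : [0,∞) → ℝ be a positive, strictly increasing C³ solution of u''/(1+(u')²) − (n−1)/u + (1/2) r u' − (1/2) u = 0. Then at any zero r₀ of u'' one has u'''(r₀) = −(1+u'(r₀)²)(n−1) u'(r₀)/u(r₀)² < 0. Consequently u'' has at most one zero on (0,∞). -/

import Mathlib

open Set Filter Topology

lemma aux_neg_right {g : ℝ → ℝ} {d r : ℝ} (hd : HasDerivAt g d r) (hd0 : d < 0)
    (hg : g r = 0) : ∀ᶠ x in 𝓝[>] r, g x < 0 := by
  have h := hasDerivAt_iff_tendsto_slope.1 hd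
  have h1 : ∀ᶠ x in 𝓝[≠] r, slope g r x < 0 := h.eventually (Iio_mem_nhds hd0)
  have h2 : ∀ᶠ x in 𝓝[>] r, slope g r x < 0 :=
    h1.filter_mono (nhdsWithin_mono r fun x hx => ne_of_gt hx)
  filter_upwards [h2, self_mem_nhdsWithin] with x hx hx'
  have hxr : (0:ℝ) < x - r := sub_pos.mpr hx'
  have : g x = slope g r x * (x - r) := by
    rw [slope_def_field]; field_simp [hg, sub_ne_zero.mpr (ne_of_gt (show r < x from hx'))]; simp [hg]
  rw [this]
  exact mul_neg_of_neg_of_pos hx hxr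

lemma aux_pos_left {g : ℝ → ℝ} {d r : ℝ} (hd : HasDerivAt g d r) (hd0 : d < 0)
    (hg : g r = 0) : ∀ᶠ x in 𝓝[<] r, 0 < g x := by
  have h := hasDerivAt_iff_tendsto_slope.1 hd
  have h1 : ∀ᶠ x in 𝓝[≠] r, slope g r x < 0 := h.eventually (Iio_mem_nhds hd0)
  have h2 : ∀ᶠ x in 𝓝[<] r, slope g r x < 0 :=
    h1.filter_mono (nhdsWithin_mono r fun x hx => ne_of_lt hx)
  filter_upwards [h2, self_mem_nhdsWithin] with x hx hx'
  have hxr : x - r < 0 := sub_neg.mpr hx'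
  have : g x = slope g r x * (x - r) := by
    rw [slope_def_field]; field_simp [hg, hxr.ne]; simp [hg]
  rw [this]
  exact mul_pos_of_neg_of_neg hx hxr

/-- For a positive, strictly increasing `C³` solution of the self-expander ODE,
at any zero `r₀ > 0` of `u''` one has
`u'''(r₀) = -(1+u'(r₀)²)(n-1)u'(r₀)/u(r₀)² < 0`; consequently `u''` has at most
one zero on `(0,∞)`. -/
theorem stmt_3 (n : ℕ) (hn : 2 ≤ n) (u : ℝ → ℝ)
    (hreg : ContDiffOn ℝ 3 u (Set.Ici 0))
    (hupos : ∀ r ∈ Set.Ici (0 : ℝ), 0 < u r)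
    (hmono : StrictMonoOn u (Set.Ici 0))
    (hode : ∀ r ∈ Set.Ici (0 : ℝ),
      deriv (deriv u) r / (1 + (deriv u r) ^ 2) - ((n : ℝ) - 1) / u r
        + (1 / 2) * r * deriv u r - (1 / 2) * u r = 0) :
    (∀ r₀ ∈ Set.Ioi (0 : ℝ), deriv (deriv u) r₀ = 0 →
      deriv (deriv (deriv u)) r₀
          = -(1 + (deriv u r₀) ^ 2) * ((n : ℝ) - 1) * deriv u r₀ / (u r₀) ^ 2 ∧
        deriv (deriv (deriv u)) r₀ < 0) ∧
      Set.Subsingleton {r : ℝ | r ∈ Set.Ioi (0 : ℝ) ∧ deriv (deriv u) r = 0} := by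
  have hs : IsOpen (Set.Ioi (0:ℝ)) := isOpen_Ioi
  have hn1 : (1:ℝ) ≤ (n:ℝ) - 1 := by
    have : (2:ℝ) ≤ (n:ℝ) := by exact_mod_cast hn
    linarith
  have hreg' : ContDiffOn ℝ 3 u (Set.Ioi 0) := hreg.mono Set.Ioi_subset_Ici_self
  have hd1 : ContDiffOn ℝ 2 (deriv u) (Set.Ioi 0) :=
    hreg'.deriv_of_isOpen hs (by norm_num)
  have hd2 : ContDiffOn ℝ 1 (deriv (deriv u)) (Set.Ioi 0) :=
    hd1.deriv_of_isOpen hs (by norm_num)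
  have hu : ∀ r ∈ Set.Ioi (0:ℝ), HasDerivAt u (deriv u r) r := fun r hr =>
    ((hreg'.differentiableOn (by norm_num)).differentiableAt (hs.mem_nhds hr)).hasDerivAt
  have hu' : ∀ r ∈ Set.Ioi (0:ℝ), HasDerivAt (deriv u) (deriv (deriv u) r) r := fun r hr =>
    ((hd1.differentiableOn (by norm_num)).differentiableAt (hs.mem_nhds hr)).hasDerivAt
  have hu'' : ∀ r ∈ Set.Ioi (0:ℝ), HasDerivAt (deriv (deriv u)) (deriv (deriv (deriv u)) r) r :=
    fun r hr =>
    ((hd2.differentiableOn (by norm_num)).differentiableAt (hs.mem_nhds hr)).hasDerivAt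
  have hcont : ContinuousOn (deriv (deriv u)) (Set.Ioi 0) := hd2.continuousOn
  have hGeq : ∀ r ∈ Set.Ioi (0:ℝ), deriv (deriv u) r
      = (1 + (deriv u r)^2) * (((n:ℝ)-1)/u r - 1/2*r*deriv u r + 1/2*u r) := by
    intro r hr
    have h := hode r (Set.mem_Ici.mpr (le_of_lt (Set.mem_Ioi.mp hr)))
    have h1 : (0:ℝ) < 1 + (deriv u r)^2 := by positivity
    have h2 : deriv (deriv u) r / (1 + (deriv u r)^2)
        = ((n:ℝ)-1)/u r - 1/2*r*deriv u r + 1/2*u r := by linarith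
    rw [div_eq_iff h1.ne'] at h2
    rw [h2, mul_comm]
  -- the key derivative computation
  have key : ∀ r₀ ∈ Set.Ioi (0:ℝ), deriv (deriv u) r₀ = 0 →
      deriv (deriv (deriv u)) r₀
        = -(1 + (deriv u r₀)^2) * ((n:ℝ)-1) * deriv u r₀ / (u r₀)^2 ∧
      deriv (deriv (deriv u)) r₀ < 0 := by
    intro r₀ hr₀ hz
    have hr₀' : (0:ℝ) < r₀ := hr₀
    have hu0 : 0 < u r₀ := hupos r₀ hr₀'.le
    have hupr : 0 < deriv u r₀ := by
      have h := hode r₀ hr₀'.le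
      rw [hz] at h
      rw [zero_div] at h
      have hdu : 0 < ((n:ℝ)-1)/u r₀ := by positivity
      by_contra h'
      push_neg at h'
      nlinarith [mul_nonpos_of_nonneg_of_nonpos hr₀'.le h']
    set T : ℝ := -(1 + (deriv u r₀)^2) * ((n:ℝ)-1) * deriv u r₀ / (u r₀)^2 with hT
    have hA : HasDerivAt (fun r => 1 + (deriv u r)^2)
        (2 * deriv u r₀ ^ 1 * deriv (deriv u) r₀) r₀ :=
      ((hu' r₀ hr₀).pow 2).const_add 1
    have hB : HasDerivAt (fun r => ((n:ℝ)-1)/u r - 1/2*r*deriv u r + 1/2*u r)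
        (((0 * u r₀ - ((n:ℝ)-1) * deriv u r₀)/(u r₀)^2
          - (1/2 * 1 * deriv u r₀ + 1/2*r₀*deriv (deriv u) r₀)) + 1/2*deriv u r₀) r₀ :=
      (((hasDerivAt_const r₀ ((n:ℝ)-1)).div (hu r₀ hr₀) hu0.ne').sub
        (((hasDerivAt_id r₀).const_mul (1/2:ℝ)).mul (hu' r₀ hr₀))).add
        ((hu r₀ hr₀).const_mul (1/2:ℝ))
    have hG := hA.mul hB
    have hG' : HasDerivAt
        (fun r => (1 + (deriv u r)^2) * (((n:ℝ)-1)/u r - 1/2*r*deriv u r + 1/2*u r)) T r₀ := by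
      refine hG.congr_deriv ?_
      rw [hT, hz]
      field_simp
      ring
    have heq : deriv (deriv u) =ᶠ[𝓝 r₀]
        (fun r => (1 + (deriv u r)^2) * (((n:ℝ)-1)/u r - 1/2*r*deriv u r + 1/2*u r)) :=
      eventually_of_mem (hs.mem_nhds hr₀) hGeq
    have hu3 : HasDerivAt (deriv (deriv u)) T r₀ := hG'.congr_of_eventuallyEq heq
    have hval : deriv (deriv (deriv u)) r₀ = T := (hu'' r₀ hr₀).unique hu3
    refine ⟨hval, ?_⟩
    rw [hval, hT]
    have hpos : 0 < ((1 + (deriv u r₀)^2) * ((n:ℝ)-1) * deriv u r₀) / (u r₀)^2 := by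
      have : (0:ℝ) < (n:ℝ)-1 := by linarith
      positivity
    have : -(1 + (deriv u r₀)^2) * ((n:ℝ)-1) * deriv u r₀ / (u r₀)^2
        = -(((1 + (deriv u r₀)^2) * ((n:ℝ)-1) * deriv u r₀) / (u r₀)^2) := by ring
    rw [this]
    exact neg_lt_zero.mpr hpos
  refine ⟨key, ?_⟩
  -- uniqueness
  have main : ∀ a b : ℝ, 0 < a → a < b → deriv (deriv u) a = 0 →
      deriv (deriv u) b = 0 → False := by
    intro a b ha0 hab haz hbz
    have hb0 : (0:ℝ) < b := ha0.trans hab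
    -- g < 0 just right of a
    have h1 : ∀ᶠ x in 𝓝[>] a, deriv (deriv u) x < 0 :=
      aux_neg_right (hu'' a ha0) (key a ha0 haz).2 haz
    have h2 : ∀ᶠ x in 𝓝[>] a, x < b := eventually_nhdsWithin_of_eventually_nhds
      (eventually_lt_nhds hab)
    have h3 : ∀ᶠ x in 𝓝[>] a, a < x := self_mem_nhdsWithin
    obtain ⟨x₀, hx₀neg, hx₀b, hx₀a⟩ := (h1.and (h2.and h3)).exists
    -- pick b' ∈ (x₀, b) with g b' > 0
    have h4 : ∀ᶠ x in 𝓝[<] b, 0 < deriv (deriv u) x :=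
      aux_pos_left (hu'' b hb0) (key b hb0 hbz).2 hbz
    have h5 : ∀ᶠ x in 𝓝[<] b, x₀ < x := eventually_nhdsWithin_of_eventually_nhds
      (eventually_gt_nhds hx₀b)
    have h6 : ∀ᶠ x in 𝓝[<] b, x < b := self_mem_nhdsWithin
    obtain ⟨b', hb'pos, hb'x₀, hb'b⟩ := (h4.and (h5.and h6)).exists
    -- the sup argument
    set S : Set ℝ := {x ∈ Set.Icc x₀ b' | deriv (deriv u) x ≤ 0} with hS
    have hx₀0 : (0:ℝ) < x₀ := ha0.trans hx₀a
    have hsubset : S ⊆ Set.Icc x₀ b' := fun x hx => hx.1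
    have hIccsub : Set.Icc x₀ b' ⊆ Set.Ioi (0:ℝ) := fun x hx => hx₀0.trans_le hx.1
    have hSclosed : IsClosed S := by
      have := (hcont.mono hIccsub).preimage_isClosed_of_isClosed isClosed_Icc
        (isClosed_Iic (a := (0:ℝ)))
      convert this using 1
      rfl
    have hScomp : IsCompact S := isCompact_Icc.of_isClosed_subset hSclosed hsubset
    have hSne : S.Nonempty := ⟨x₀, ⟨le_refl x₀, hb'x₀.le⟩, hx₀neg.le⟩
    have hbdd : BddAbove S := hScomp.bddAbove
    set c := sSup S with hc
    have hcS : c ∈ S := hScomp.sSup_mem hSne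
    have hcIcc := hcS.1
    have hc0 : (0:ℝ) < c := hx₀0.trans_le hcIcc.1
    have hcb' : c < b' := lt_of_le_of_ne hcIcc.2 (fun h => by
      rw [h] at hcS; exact absurd hcS.2 (not_le.mpr hb'pos))
    -- in both cases, g < 0 eventually right of c
    have hev : ∀ᶠ x in 𝓝[>] c, deriv (deriv u) x < 0 := by
      rcases lt_or_eq_of_le hcS.2 with hlt | heq0
      · have hct : ContinuousAt (deriv (deriv u)) c :=
          hcont.continuousAt (hs.mem_nhds hc0)
        exact eventually_nhdsWithin_of_eventually_nhds (hct.eventually_lt_const hlt)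
      · exact aux_neg_right (hu'' c hc0) (key c hc0 heq0).2 heq0
    have hev2 : ∀ᶠ x in 𝓝[>] c, x < b' := eventually_nhdsWithin_of_eventually_nhds
      (eventually_lt_nhds hcb')
    have hev3 : ∀ᶠ x in 𝓝[>] c, c < x := self_mem_nhdsWithin
    obtain ⟨y, hyneg, hyb', hyc⟩ := (hev.and (hev2.and hev3)).exists
    have hyS : y ∈ S := ⟨⟨hcIcc.1.trans hyc.le, hyb'.le⟩, hyneg.le⟩
    exact absurd (le_csSup hbdd hyS) (not_le.mpr hyc)
  intro x hx y hy
  by_contra hne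
  rcases lt_trichotomy x y with h|h|h
  · exact absurd (main x y hx.1 h hx.2 hy.2) not_false
  · exact hne h
  · exact absurd (main y x hy.1 h hy.2 hx.2) not_false
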